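/- Let H be a Hopf quasigroup over a field k with antipode λ, let B be a right H-comodule magma and h: H → B a total integral. Writing q_B(b) = b_(0) · h(λ(b_(1))), the coaction of the image of q_B is trivial: ρ_B(q_B(b)) = q_B(b) ⊗ 1_H for all b ∈ B. -/

import Mathlib

open TensorProduct

noncomputable section

namespace DoiHopf

variable (k : Type) [Field k]
variable (H : Type) [AddCommGroup H] [Module k H]

/-- A Hopf quasigroup structure on `H`: a unital (not necessarily associative) magma and a
coassociative counital comonoid such that `eps` and `delta` are morphisms of unital magmas,
with an antipode `lam` satisfying the four Hopf quasigroup antipode identities. -/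
structure IsHopfQuasigroup (mul : H ⊗[k] H →ₗ[k] H) (one : H)
    (eps : H →ₗ[k] k) (delta : H →ₗ[k] H ⊗[k] H) (lam : H →ₗ[k] H) : Prop where
  one_mul : ∀ x, mul (one ⊗ₜ[k] x) = x
  mul_one : ∀ x, mul (x ⊗ₜ[k] one) = x
  coassoc : (TensorProduct.assoc k H H H).toLinearMap ∘ₗ delta.rTensor H ∘ₗ delta
      = delta.lTensor H ∘ₗ delta
  counit_left : ∀ x, (TensorProduct.lid k H) ((eps.rTensor H) (delta x)) = x
  counit_right : ∀ x, (TensorProduct.rid k H) ((eps.lTensor H) (delta x)) = x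
  eps_mul : ∀ x y, eps (mul (x ⊗ₜ[k] y)) = eps x * eps y
  eps_one : eps one = 1
  delta_mul : delta ∘ₗ mul = (TensorProduct.map mul mul)
      ∘ₗ (TensorProduct.tensorTensorTensorComm k H H H H).toLinearMap
      ∘ₗ (TensorProduct.map delta delta)
  delta_one : delta one = one ⊗ₜ[k] one
  antipode_left₁ : mul ∘ₗ (TensorProduct.map lam mul)
      ∘ₗ (TensorProduct.assoc k H H H).toLinearMap ∘ₗ delta.rTensor H
      = (TensorProduct.lid k H).toLinearMap ∘ₗ eps.rTensor H
  antipode_left₂ : mul ∘ₗ (TensorProduct.map (LinearMap.id : H →ₗ[k] H) (mul ∘ₗ lam.rTensor H))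
      ∘ₗ (TensorProduct.assoc k H H H).toLinearMap ∘ₗ delta.rTensor H
      = (TensorProduct.lid k H).toLinearMap ∘ₗ eps.rTensor H
  antipode_right₁ : mul ∘ₗ (TensorProduct.map mul lam)
      ∘ₗ (TensorProduct.assoc k H H H).symm.toLinearMap ∘ₗ delta.lTensor H
      = (TensorProduct.rid k H).toLinearMap ∘ₗ eps.lTensor H
  antipode_right₂ : mul ∘ₗ (TensorProduct.map (mul ∘ₗ lam.lTensor H) (LinearMap.id : H →ₗ[k] H))
      ∘ₗ (TensorProduct.assoc k H H H).symm.toLinearMap ∘ₗ delta.lTensor H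
      = (TensorProduct.rid k H).toLinearMap ∘ₗ eps.lTensor H

/-- A right `H`-comodule magma structure on `B`: a unital magma which is a right `H`-comodule
whose coaction is multiplicative for the tensor product magma structure on `B ⊗ H` and
sends the unit to `1_B ⊗ 1_H`. -/
structure IsComoduleMagma (mul : H ⊗[k] H →ₗ[k] H) (one : H)
    (eps : H →ₗ[k] k) (delta : H →ₗ[k] H ⊗[k] H)
    {B : Type} [AddCommGroup B] [Module k B]
    (mulB : B ⊗[k] B →ₗ[k] B) (oneB : B) (rho : B →ₗ[k] B ⊗[k] H) : Prop where
  oneB_mul : ∀ b, mulB (oneB ⊗ₜ[k] b) = b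
  mul_oneB : ∀ b, mulB (b ⊗ₜ[k] oneB) = b
  counit : ∀ b, (TensorProduct.rid k B) ((eps.lTensor B) (rho b)) = b
  coassoc : rho.rTensor H ∘ₗ rho
      = (TensorProduct.assoc k B H H).symm.toLinearMap ∘ₗ delta.lTensor B ∘ₗ rho
  mul_compat : rho ∘ₗ mulB = (TensorProduct.map mulB mul)
      ∘ₗ (TensorProduct.tensorTensorTensorComm k B H B H).toLinearMap
      ∘ₗ (TensorProduct.map rho rho)
  one_compat : rho oneB = oneB ⊗ₜ[k] one

/-- The generic "action against `f : H → B'` after the coaction" endomorphism; for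
`f = h ∘ λ` this is the canonical idempotent `q` of the paper. -/
def act {M B' : Type} [AddCommGroup M] [Module k M] [AddCommGroup B'] [Module k B']
    (phi : M ⊗[k] B' →ₗ[k] M) (rho : M →ₗ[k] M ⊗[k] H) (f : H →ₗ[k] B') : M →ₗ[k] M :=
  phi ∘ₗ f.lTensor M ∘ₗ rho

variable (B : Type) [AddCommGroup B] [Module k B]
variable (mul : H ⊗[k] H →ₗ[k] H) (one : H) (eps : H →ₗ[k] k)
variable (delta : H →ₗ[k] H ⊗[k] H) (lam : H →ₗ[k] H)
variable (mulB : B ⊗[k] B →ₗ[k] B) (oneB : B) (rho : B →ₗ[k] B ⊗[k] H)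
variable (h : H →ₗ[k] B)


/-! ### Auxiliary machinery for the proof -/

section Aux

open LinearMap

/-- `εL(x ⊗ y) = ε(x) • y`. -/
private def epsL : H ⊗[k] H →ₗ[k] H :=
  (TensorProduct.lid k H).toLinearMap ∘ₗ eps.rTensor H

/-- `A1' ((x ⊗ y) ⊗ z) = λ(x) · (y · z)`. -/
private def A1' : (H ⊗[k] H) ⊗[k] H →ₗ[k] H :=
  mul ∘ₗ (TensorProduct.map lam mul) ∘ₗ (TensorProduct.assoc k H H H).toLinearMap

/-- The left-hand side of the first left antipode identity. -/
private def A1x : H ⊗[k] H →ₗ[k] H :=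
  A1' k H mul lam ∘ₗ delta.rTensor H

/-- `Φ (a ⊗ b) = Σ (λb)₍₁₎ ⊗ a·(λb)₍₂₎`. -/
private def PhiM : H ⊗[k] H →ₗ[k] H ⊗[k] H :=
  mul.lTensor H ∘ₗ (TensorProduct.leftComm k H H H).toLinearMap
    ∘ₗ ((delta ∘ₗ lam).lTensor H)

/-- `Λ ((x ⊗ y) ⊗ z) = Σ (x ⊗ (λz)₍₁₎) ⊗ y·(λz)₍₂₎`. -/
private def LamM : (H ⊗[k] H) ⊗[k] H →ₗ[k] (H ⊗[k] H) ⊗[k] H :=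
  mul.lTensor (H ⊗[k] H)
    ∘ₗ (TensorProduct.tensorTensorTensorComm k H H H H).toLinearMap
    ∘ₗ ((delta ∘ₗ lam).lTensor (H ⊗[k] H))

/-- `Λ₂ (((p ⊗ q) ⊗ r) ⊗ z) = Σ ((p ⊗ q) ⊗ (λz)₍₁₎) ⊗ r·(λz)₍₂₎`. -/
private def Lam2 : ((H ⊗[k] H) ⊗[k] H) ⊗[k] H →ₗ[k] ((H ⊗[k] H) ⊗[k] H) ⊗[k] H :=
  mul.lTensor ((H ⊗[k] H) ⊗[k] H)
    ∘ₗ (TensorProduct.tensorTensorTensorComm k (H ⊗[k] H) H H H).toLinearMap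
    ∘ₗ ((delta ∘ₗ lam).lTensor ((H ⊗[k] H) ⊗[k] H))

/-- The quadrilinear processing map. -/
private def M4 : ((H ⊗[k] H) ⊗[k] H) ⊗[k] H →ₗ[k] H ⊗[k] H :=
  (A1' k H mul lam).rTensor H ∘ₗ Lam2 k H mul delta lam

/-- `J₂ ((m₁ ⊗ m₂) ⊗ z) = Σ m₁·(λz)₍₁₎ ⊗ m₂·(λz)₍₂₎`. -/
private def J2 : (H ⊗[k] H) ⊗[k] H →ₗ[k] H ⊗[k] H :=
  (TensorProduct.map mul mul)
    ∘ₗ (TensorProduct.tensorTensorTensorComm k H H H H).toLinearMap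
    ∘ₗ ((delta ∘ₗ lam).lTensor (H ⊗[k] H))

/-- Reassociation `a ⊗ ((m₁ ⊗ m₂) ⊗ z) ↦ ((a ⊗ m₁) ⊗ m₂) ⊗ z`. -/
private def iot : H ⊗[k] ((H ⊗[k] H) ⊗[k] H) →ₗ[k] ((H ⊗[k] H) ⊗[k] H) ⊗[k] H :=
  ((TensorProduct.assoc k H H H).symm.toLinearMap.rTensor H)
    ∘ₗ (TensorProduct.assoc k H (H ⊗[k] H) H).symm.toLinearMap

/-- Fourfold coproduct, left normal form. -/
private def Delta4L : H →ₗ[k] ((H ⊗[k] H) ⊗[k] H) ⊗[k] H :=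
  ((delta.rTensor H).rTensor H) ∘ₗ (delta.rTensor H) ∘ₗ delta

/-- Fourfold coproduct, mixed form. -/
private def Delta4M : H →ₗ[k] H ⊗[k] ((H ⊗[k] H) ⊗[k] H) :=
  ((delta.rTensor H).lTensor H) ∘ₗ (delta.lTensor H) ∘ₗ delta

/-- `g = (h ⊗ id) ∘ δ ∘ λ`. -/
private def gmap : H →ₗ[k] B ⊗[k] H :=
  (h.rTensor H) ∘ₗ (delta ∘ₗ lam)

variable {k H B mul one eps delta lam mulB oneB rho h}

private lemma hP1 (hH : IsHopfQuasigroup k H mul one eps delta lam) :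
    ∀ x : H, mul ((lam.lTensor H) (delta x)) = eps x • one := by
  intro x
  have hx := LinearMap.congr_fun hH.antipode_right₁ (one ⊗ₜ[k] x)
  simp only [LinearMap.comp_apply, LinearEquiv.coe_coe, lTensor_tmul,
    TensorProduct.rid_tmul] at hx
  rw [← hx]
  congr 1
  induction (delta x) using TensorProduct.induction_on with
  | zero => simp
  | tmul a b =>
      simp [TensorProduct.assoc_symm_tmul, hH.one_mul]
  | add u v hu hv =>
      simp only [TensorProduct.tmul_add, map_add, hu, hv]

private lemma hepsLdelta (hH : IsHopfQuasigroup k H mul one eps delta lam) :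
    epsL k H eps ∘ₗ delta = LinearMap.id := by
  ext x
  simpa [epsL] using hH.counit_left x

private lemma hCC1 (hH : IsHopfQuasigroup k H mul one eps delta lam) :
    (epsL k H eps).rTensor H ∘ₗ delta.rTensor H = LinearMap.id := by
  rw [← LinearMap.rTensor_comp, hepsLdelta hH, LinearMap.rTensor_id]

private lemma hS1'' (v u : H ⊗[k] H) :
    (mul.lTensor H) ((TensorProduct.leftComm k H H H) ((epsL k H eps v) ⊗ₜ[k] u))
      = (epsL k H eps).rTensor H
          ((mul.lTensor (H ⊗[k] H))
            ((TensorProduct.tensorTensorTensorComm k H H H H) (v ⊗ₜ[k] u))) := by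
  induction v using TensorProduct.induction_on with
  | zero => simp
  | tmul x y =>
      induction u using TensorProduct.induction_on with
      | zero => simp
      | tmul u₁ u₂ =>
          simp only [epsL, LinearMap.comp_apply, LinearEquiv.coe_coe,
            LinearMap.rTensor_tmul, TensorProduct.lid_tmul,
            TensorProduct.smul_tmul', map_smul,
            TensorProduct.leftComm_tmul, TensorProduct.tensorTensorTensorComm_tmul,
            LinearMap.lTensor_tmul]
          rw [← TensorProduct.smul_tmul', map_smul, TensorProduct.tmul_smul,
            ← TensorProduct.smul_tmul']
      | add u u' hu hu' =>
          simp only [TensorProduct.tmul_add, map_add, hu, hu']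
  | add v v' hv hv' =>
      simp only [TensorProduct.add_tmul, map_add, hv, hv']

private lemma hS1 (w : (H ⊗[k] H) ⊗[k] H) :
    PhiM k H mul delta lam ((epsL k H eps).rTensor H w)
      = (epsL k H eps).rTensor H (LamM k H mul delta lam w) := by
  induction w using TensorProduct.induction_on with
  | zero => simp
  | tmul v z =>
      simp only [PhiM, LamM, LinearMap.comp_apply, LinearMap.rTensor_tmul,
        LinearMap.lTensor_tmul]
      exact hS1'' v ((delta ∘ₗ lam) z)
  | add a b ha hb => simp only [map_add, ha, hb]

private lemma hCommL (w : (H ⊗[k] H) ⊗[k] H) :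
    ((delta.rTensor H).rTensor H) (LamM k H mul delta lam w)
      = Lam2 k H mul delta lam (((delta.rTensor H).rTensor H) w) := by
  induction w using TensorProduct.induction_on with
  | zero => simp
  | tmul v z =>
      simp only [LamM, Lam2, LinearMap.comp_apply, LinearMap.rTensor_tmul,
        LinearMap.lTensor_tmul]
      generalize delta (lam z) = u
      induction v using TensorProduct.induction_on with
      | zero => simp
      | tmul x y =>
          induction u using TensorProduct.induction_on with
          | zero => simp
          | tmul u₁ u₂ =>
              simp only [TensorProduct.tensorTensorTensorComm_tmul,
                LinearEquiv.coe_coe, LinearMap.lTensor_tmul,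
                LinearMap.rTensor_tmul]
          | add a b ha hb => simp only [TensorProduct.tmul_add, map_add, ha, hb]
      | add a b ha hb => simp only [TensorProduct.add_tmul, map_add, ha, hb]
  | add a b ha hb => simp only [map_add, ha, hb]

private lemma hTside (c : H) :
    (A1x k H mul delta lam).rTensor H
        (LamM k H mul delta lam ((delta.rTensor H) (delta c)))
      = M4 k H mul delta lam (Delta4L k H delta c) := by
  have h1 : (A1x k H mul delta lam).rTensor H
      = ((A1' k H mul lam).rTensor H) ∘ₗ ((delta.rTensor H).rTensor H) := by
    rw [A1x, LinearMap.rTensor_comp]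
  rw [h1]
  simp only [LinearMap.comp_apply]
  rw [hCommL]
  simp only [M4, Delta4L, LinearMap.comp_apply]

private lemma hco' (hH : IsHopfQuasigroup k H mul one eps delta lam) :
    delta.rTensor H ∘ₗ delta
      = (TensorProduct.assoc k H H H).symm.toLinearMap ∘ₗ (delta.lTensor H ∘ₗ delta) := by
  rw [← hH.coassoc]
  ext x
  simp

private lemma hco'at (hH : IsHopfQuasigroup k H mul one eps delta lam) (y : H) :
    (delta.rTensor H) (delta y)
      = (TensorProduct.assoc k H H H).symm ((delta.lTensor H) (delta y)) := by
  have e := LinearMap.congr_fun (hco' hH) y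
  simpa using e

private lemma hNAT2 (z : H ⊗[k] (H ⊗[k] H)) :
    ((delta.lTensor H).rTensor H) ((TensorProduct.assoc k H H H).symm z)
      = (TensorProduct.assoc k H (H ⊗[k] H) H).symm
          (((delta.rTensor H).lTensor H) z) := by
  induction z using TensorProduct.induction_on with
  | zero => simp
  | tmul a w =>
      induction w using TensorProduct.induction_on with
      | zero => simp
      | tmul x y => simp
      | add u v hu hv => simp only [TensorProduct.tmul_add, map_add, hu, hv]
  | add u v hu hv => simp only [map_add, hu, hv]

private lemma hGC (hH : IsHopfQuasigroup k H mul one eps delta lam) (c : H) :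
    Delta4L k H delta c = iot k H (Delta4M k H delta c) := by
  have e1 : ((delta.rTensor H).rTensor H) ∘ₗ (delta.rTensor H)
      = (((TensorProduct.assoc k H H H).symm.toLinearMap
          ∘ₗ (delta.lTensor H ∘ₗ delta)).rTensor H) := by
    rw [← LinearMap.rTensor_comp, hco' hH]
  have e2 : (((TensorProduct.assoc k H H H).symm.toLinearMap
        ∘ₗ (delta.lTensor H ∘ₗ delta)).rTensor H)
      = ((TensorProduct.assoc k H H H).symm.toLinearMap.rTensor H)
          ∘ₗ (((delta.lTensor H).rTensor H) ∘ₗ (delta.rTensor H)) := by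
    rw [LinearMap.rTensor_comp, LinearMap.rTensor_comp]
  calc Delta4L k H delta c
      = (((delta.rTensor H).rTensor H) ∘ₗ (delta.rTensor H)) (delta c) := rfl
    _ = (((TensorProduct.assoc k H H H).symm.toLinearMap.rTensor H)
          ∘ₗ (((delta.lTensor H).rTensor H) ∘ₗ (delta.rTensor H))) (delta c) := by
        rw [e1, e2]
    _ = ((TensorProduct.assoc k H H H).symm.toLinearMap.rTensor H)
          (((delta.lTensor H).rTensor H)
            ((TensorProduct.assoc k H H H).symm ((delta.lTensor H) (delta c)))) := by
        simp only [LinearMap.comp_apply]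
        rw [hco'at hH c]
    _ = ((TensorProduct.assoc k H H H).symm.toLinearMap.rTensor H)
          ((TensorProduct.assoc k H (H ⊗[k] H) H).symm
            (((delta.rTensor H).lTensor H) ((delta.lTensor H) (delta c)))) := by
        rw [hNAT2]
    _ = iot k H (Delta4M k H delta c) := rfl

private lemma hFa (v : H ⊗[k] ((H ⊗[k] H) ⊗[k] H)) :
    M4 k H mul delta lam (iot k H v)
      = (mul.rTensor H) ((TensorProduct.assoc k H H H).symm
          ((TensorProduct.map lam (J2 k H mul delta lam)) v)) := by
  induction v using TensorProduct.induction_on with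
  | zero => simp
  | tmul a w =>
      induction w using TensorProduct.induction_on with
      | zero => simp
      | tmul v' z =>
          simp only [M4, iot, J2, Lam2, A1', LinearMap.comp_apply,
            LinearEquiv.coe_coe, TensorProduct.assoc_symm_tmul,
            LinearMap.rTensor_tmul, LinearMap.lTensor_tmul,
            TensorProduct.map_tmul]
          generalize delta (lam z) = u
          induction v' using TensorProduct.induction_on with
          | zero => simp
          | tmul m₁ m₂ =>
              induction u using TensorProduct.induction_on with
              | zero => simp
              | tmul u₁ u₂ =>
                  simp only [TensorProduct.assoc_symm_tmul,
                    TensorProduct.tensorTensorTensorComm_tmul,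
                    LinearEquiv.coe_coe, LinearMap.lTensor_tmul,
                    LinearMap.rTensor_tmul, LinearMap.comp_apply,
                    TensorProduct.map_tmul, TensorProduct.assoc_tmul]
              | add p q hp hq =>
                  simp only [TensorProduct.tmul_add, map_add, hp, hq,
                    TensorProduct.add_tmul]
          | add p q hp hq =>
              simp only [TensorProduct.tmul_add, TensorProduct.add_tmul,
                map_add, hp, hq]
      | add p q hp hq =>
          simp only [TensorProduct.tmul_add, map_add, hp, hq]
  | add p q hp hq => simp only [map_add, hp, hq]

private lemma hJ2m (hH : IsHopfQuasigroup k H mul one eps delta lam) :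
    J2 k H mul delta lam ∘ₗ ((delta.rTensor H) ∘ₗ delta)
      = eps.smulRight (one ⊗ₜ[k] one) := by
  have m1 : ((delta ∘ₗ lam).lTensor (H ⊗[k] H)) ∘ₗ (delta.rTensor H)
      = TensorProduct.map delta (delta ∘ₗ lam) := by
    rw [LinearMap.lTensor_comp_rTensor]
  have m2 : TensorProduct.map delta (delta ∘ₗ lam)
      = (TensorProduct.map delta delta) ∘ₗ (lam.lTensor H) := by
    have : TensorProduct.map (delta ∘ₗ LinearMap.id) (delta ∘ₗ lam)
        = (TensorProduct.map delta delta) ∘ₗ (TensorProduct.map LinearMap.id lam) :=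
      TensorProduct.map_comp delta delta LinearMap.id lam
    simpa using this
  ext c
  simp only [LinearMap.comp_apply, J2, LinearMap.smulRight_apply, LinearEquiv.coe_coe]
  rw [show ((delta ∘ₗ lam).lTensor (H ⊗[k] H)) ((delta.rTensor H) (delta c))
      = (TensorProduct.map delta delta) ((lam.lTensor H) (delta c)) from by
    rw [← LinearMap.comp_apply, m1, m2]; rfl]
  have dm := LinearMap.congr_fun hH.delta_mul ((lam.lTensor H) (delta c))
  simp only [LinearMap.comp_apply, LinearEquiv.coe_coe] at dm
  rw [← dm, hP1 hH, map_smul, hH.delta_one]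

private lemma hB2 (hH : IsHopfQuasigroup k H mul one eps delta lam) (c : H) :
    (TensorProduct.map lam (eps.smulRight (one ⊗ₜ[k] one))) (delta c)
      = lam c ⊗ₜ[k] (one ⊗ₜ[k] one) := by
  have fact : TensorProduct.map lam (eps.smulRight (one ⊗ₜ[k] one))
      = ((TensorProduct.mk k H (H ⊗[k] H)).flip (one ⊗ₜ[k] one)) ∘ₗ lam
          ∘ₗ (TensorProduct.rid k H).toLinearMap ∘ₗ (eps.lTensor H) := by
    apply TensorProduct.ext'
    intro a b
    simp only [TensorProduct.map_tmul, LinearMap.smulRight_apply,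
      LinearMap.comp_apply, LinearEquiv.coe_coe, LinearMap.lTensor_tmul,
      TensorProduct.rid_tmul, map_smul, TensorProduct.mk_apply,
      LinearMap.flip_apply]
    simp only [TensorProduct.tmul_smul, ← TensorProduct.smul_tmul']
  rw [fact]
  simp only [LinearMap.comp_apply, LinearEquiv.coe_coe]
  rw [hH.counit_right c]
  simp

private lemma hFINAL (hH : IsHopfQuasigroup k H mul one eps delta lam) (c : H) :
    M4 k H mul delta lam (iot k H (Delta4M k H delta c)) = lam c ⊗ₜ[k] one := by
  rw [hFa]
  have d1 : (TensorProduct.map lam (J2 k H mul delta lam)) (Delta4M k H delta c)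
      = (TensorProduct.map lam (eps.smulRight (one ⊗ₜ[k] one))) (delta c) := by
    have e : (TensorProduct.map lam (J2 k H mul delta lam)) ∘ₗ (Delta4M k H delta)
        = (TensorProduct.map lam (eps.smulRight (one ⊗ₜ[k] one))) ∘ₗ delta := by
      unfold Delta4M
      rw [show ((delta.rTensor H).lTensor H) ∘ₗ (delta.lTensor H ∘ₗ delta)
          = (((delta.rTensor H) ∘ₗ delta).lTensor H) ∘ₗ delta from by
        rw [LinearMap.lTensor_comp]; rfl]
      rw [show (TensorProduct.map lam (J2 k H mul delta lam))
            ∘ₗ ((((delta.rTensor H) ∘ₗ delta).lTensor H) ∘ₗ delta)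
          = ((TensorProduct.map lam (J2 k H mul delta lam))
              ∘ₗ (((delta.rTensor H) ∘ₗ delta).lTensor H)) ∘ₗ delta from rfl]
      congr 1
      have : TensorProduct.map (lam ∘ₗ LinearMap.id)
            (J2 k H mul delta lam ∘ₗ ((delta.rTensor H) ∘ₗ delta))
          = TensorProduct.map lam (J2 k H mul delta lam)
              ∘ₗ TensorProduct.map LinearMap.id ((delta.rTensor H) ∘ₗ delta) :=
        TensorProduct.map_comp lam (J2 k H mul delta lam) LinearMap.id
          ((delta.rTensor H) ∘ₗ delta)
      rw [show (((delta.rTensor H) ∘ₗ delta).lTensor H)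
          = TensorProduct.map LinearMap.id ((delta.rTensor H) ∘ₗ delta) from rfl,
        ← this, hJ2m hH]
      simp
    exact LinearMap.congr_fun e c
  rw [d1, hB2 hH]
  simp [hH.mul_one]

private lemma hSTAR (hH : IsHopfQuasigroup k H mul one eps delta lam) (c : H) :
    PhiM k H mul delta lam (delta c) = lam c ⊗ₜ[k] one := by
  have hA1 : A1x k H mul delta lam = epsL k H eps := by
    apply LinearMap.ext
    intro x
    have ax := LinearMap.congr_fun hH.antipode_left₁ x
    simpa [A1x, A1', epsL, LinearMap.comp_apply] using ax
  have cc : delta c = (epsL k H eps).rTensor H ((delta.rTensor H) (delta c)) := by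
    have e := LinearMap.congr_fun (hCC1 (mul := mul) (one := one) (lam := lam) hH) (delta c)
    simpa using e.symm
  calc PhiM k H mul delta lam (delta c)
      = PhiM k H mul delta lam
          ((epsL k H eps).rTensor H ((delta.rTensor H) (delta c))) := by rw [← cc]
    _ = (epsL k H eps).rTensor H
          (LamM k H mul delta lam ((delta.rTensor H) (delta c))) := hS1 _
    _ = (A1x k H mul delta lam).rTensor H
          (LamM k H mul delta lam ((delta.rTensor H) (delta c))) := by rw [hA1]
    _ = M4 k H mul delta lam (Delta4L k H delta c) := hTside c
    _ = M4 k H mul delta lam (iot k H (Delta4M k H delta c)) := by rw [hGC hH c]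
    _ = lam c ⊗ₜ[k] one := hFINAL hH c

private lemma hMK1 (p : B) (w : H ⊗[k] H) :
    (TensorProduct.map mulB mul)
        ((TensorProduct.tensorTensorTensorComm k B H B H)
          (((gmap k H B delta lam h).lTensor (B ⊗[k] H))
            ((TensorProduct.assoc k B H H).symm (p ⊗ₜ[k] w))))
      = ((mulB ∘ₗ (TensorProduct.mk k B B p) ∘ₗ h).rTensor H)
          (PhiM k H mul delta lam w) := by
  induction w using TensorProduct.induction_on with
  | zero => simp
  | tmul c₁ c₂ =>
      simp only [gmap, PhiM, LinearMap.comp_apply, LinearEquiv.coe_coe,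
        TensorProduct.assoc_symm_tmul, LinearMap.lTensor_tmul]
      generalize delta (lam c₂) = u
      induction u using TensorProduct.induction_on with
      | zero => simp
      | tmul u₁ u₂ =>
          simp only [LinearMap.rTensor_tmul, LinearMap.lTensor_tmul,
            TensorProduct.tensorTensorTensorComm_tmul, LinearEquiv.coe_coe,
            TensorProduct.leftComm_tmul, TensorProduct.map_tmul,
            LinearMap.comp_apply, TensorProduct.mk_apply]
      | add a b ha hb =>
          simp only [TensorProduct.tmul_add, map_add, ha, hb]
  | add a b ha hb => simp only [TensorProduct.tmul_add, map_add, ha, hb]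

private lemma hMAINKEY (hH : IsHopfQuasigroup k H mul one eps delta lam)
    (v : B ⊗[k] H) :
    (TensorProduct.map mulB mul)
        ((TensorProduct.tensorTensorTensorComm k B H B H)
          (((gmap k H B delta lam h).lTensor (B ⊗[k] H))
            ((TensorProduct.assoc k B H H).symm ((delta.lTensor B) v))))
      = mulB (((h ∘ₗ lam).lTensor B) v) ⊗ₜ[k] one := by
  induction v using TensorProduct.induction_on with
  | zero => simp
  | tmul p c =>
      rw [show (delta.lTensor B) (p ⊗ₜ[k] c) = p ⊗ₜ[k] delta c from rfl]
      rw [hMK1 (mul := mul) (mulB := mulB) p (delta c), hSTAR hH c]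
      simp
  | add a b ha hb => simp only [map_add, ha, hb, TensorProduct.add_tmul]

end Aux
/-- For a Hopf quasigroup `H`, a right `H`-comodule magma `B` and a total integral
`h : H → B`, the image of `q_B(b) = b₍₀₎ · h(λ(b₍₁₎))` is coinvariant:
`ρ_B(q_B b) = q_B b ⊗ 1_H`. -/
theorem rho_qB_trivial
    (hH : IsHopfQuasigroup k H mul one eps delta lam)
    (hB : IsComoduleMagma k H mul one eps delta mulB oneB rho)
    (hcomod : rho ∘ₗ h = h.rTensor H ∘ₗ delta)
    (hone : h one = oneB) :
    ∀ b : B, rho (act k H mulB rho (h ∘ₗ lam) b)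
      = act k H mulB rho (h ∘ₗ lam) b ⊗ₜ[k] one := by
  intro b
  have e1 := LinearMap.congr_fun hB.mul_compat (((h ∘ₗ lam).lTensor B) (rho b))
  simp only [LinearMap.comp_apply, LinearEquiv.coe_coe] at e1
  have m1 : (TensorProduct.map rho rho) ∘ₗ ((h ∘ₗ lam).lTensor B)
      = ((gmap k H B delta lam h).lTensor (B ⊗[k] H)) ∘ₗ (rho.rTensor H) := by
    apply TensorProduct.ext'
    intro p c
    have hc := LinearMap.congr_fun hcomod (lam c)
    simp only [LinearMap.comp_apply] at hc
    simp only [gmap, LinearMap.comp_apply, TensorProduct.map_tmul,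
      LinearMap.lTensor_tmul, LinearMap.rTensor_tmul, hc]
  have m1' := LinearMap.congr_fun m1 (rho b)
  simp only [LinearMap.comp_apply] at m1'
  have e4 := LinearMap.congr_fun hB.coassoc b
  simp only [LinearMap.comp_apply, LinearEquiv.coe_coe] at e4
  have key := hMAINKEY (mulB := mulB) (h := h) hH (rho b)
  show rho (mulB (((h ∘ₗ lam).lTensor B) (rho b)))
      = mulB (((h ∘ₗ lam).lTensor B) (rho b)) ⊗ₜ[k] one
  rw [e1, m1', e4]
  exact key
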